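/- Let 0<q<p, p+q≤1, ρ=p/q. For the transient random walk on ℤ≥0 with forward p, backward q, holding r, and partial reflection α at 0, started at i₀, the identity P(escape to +∞) = (p-q)·x_k holds for every k≥i₀, where x_k is the expected number of visits to state k. -/
import Mathlib


/-- For the transient walk on ℕ with partial reflection α at 0 started at i₀, the escape
    probability 1-(1-α)x_0 equals (p-q)·x_k for every k ≥ i₀, where x is the (bounded)
    expected-visits function. -/
theorem stmt6 (p q r α : ℝ) (hq : 0 < q) (hqp : q < p) (hpq : p + q ≤ 1)
    (hr : r = 1 - p - q) (hα0 : 0 ≤ α) (hα1 : α < 1)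
    (i₀ : ℕ) (hi₀ : 1 ≤ i₀) (x : ℕ → ℝ)
    (h0 : x 0 = q * x 1)
    (h1 : x 1 = (if i₀ = 1 then (1 : ℝ) else 0) + α * x 0 + q * x 2 + r * x 1)
    (hk : ∀ k, 2 ≤ k →
      x k = (if k = i₀ then (1 : ℝ) else 0) + p * x (k - 1) + q * x (k + 1) + r * x k)
    (hbdd : ∃ C, ∀ k, |x k| ≤ C) :
    ∀ k, i₀ ≤ k → 1 - (1 - α) * x 0 = (p - q) * x k := by
  have hq' : q ≠ 0 := ne_of_gt hq
  have hρ1 : 1 < p / q := (one_lt_div hq).mpr hqp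
  -- difference recurrence beyond i₀
  have hd : ∀ m, i₀ + 1 ≤ m → x (m + 1) - x m = (p / q) * (x m - x (m - 1)) := by
    intro m hm
    have hm2 : 2 ≤ m := by omega
    have hne : m ≠ i₀ := by omega
    have h := hk m hm2
    rw [if_neg hne, hr] at h
    have key : q * (x (m + 1) - x m) = p * (x m - x (m - 1)) := by linarith
    rw [div_mul_eq_mul_div, eq_div_iff hq']
    linarith
  -- geometric growth of differences
  have hgeo : ∀ n, x (i₀ + 1 + n) - x (i₀ + n) = (p / q) ^ n * (x (i₀ + 1) - x i₀) := by
    intro n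
    induction n with
    | zero => simp
    | succ n ih =>
      have h := hd (i₀ + n + 1) (by omega)
      have e1 : i₀ + n + 1 - 1 = i₀ + n := by omega
      rw [e1] at h
      have e2 : i₀ + 1 + (n + 1) = i₀ + n + 1 + 1 := by ring
      have e3 : i₀ + (n + 1) = i₀ + n + 1 := by ring
      have e4 : i₀ + 1 + n = i₀ + n + 1 := by ring
      rw [e2, e3, h, pow_succ]
      rw [e4] at ih
      rw [ih] at h ⊢
      ring
  obtain ⟨C, hC⟩ := hbdd
  have hzero : x (i₀ + 1) - x i₀ = 0 := by
    by_contra h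
    have habs : 0 < |x (i₀ + 1) - x i₀| := abs_pos.mpr h
    obtain ⟨n, hn⟩ := pow_unbounded_of_one_lt ((2 * C + 1) / |x (i₀ + 1) - x i₀|) hρ1
    have hg := hgeo n
    have h1b := abs_le.mp (hC (i₀ + 1 + n))
    have h2b := abs_le.mp (hC (i₀ + n))
    have hb : |x (i₀ + 1 + n) - x (i₀ + n)| ≤ 2 * C := by
      rw [abs_le]; constructor <;> [linarith [h1b.1, h2b.2]; linarith [h1b.2, h2b.1]]
    rw [hg, abs_mul, abs_pow, abs_of_pos (lt_trans one_pos hρ1)] at hb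
    rw [div_lt_iff₀ habs] at hn
    nlinarith [pow_pos (lt_trans one_pos hρ1) n]
  -- constancy beyond i₀
  have hconst : ∀ n, x (i₀ + n) = x i₀ := by
    intro n
    induction n with
    | zero => rfl
    | succ n ih =>
      have h := hgeo n
      rw [hzero, mul_zero] at h
      have e4 : i₀ + 1 + n = i₀ + (n + 1) := by ring
      rw [e4] at h
      linarith
  -- the telescoping identity
  have hg : ∀ k, 1 ≤ k →
      q * x (k + 1) - p * x k = (1 - α) * x 0 - (if i₀ ≤ k then 1 else 0) := by
    intro k hk1
    induction k with
    | zero => omega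
    | succ k ih =>
      rcases Nat.eq_zero_or_pos k with hk0 | hk0
      · subst hk0
        have hiff : (i₀ ≤ 1) ↔ (i₀ = 1) := by omega
        by_cases hi1 : i₀ = 1
        · rw [if_pos hi1, hr] at h1
          rw [if_pos (hiff.mpr hi1)]
          norm_num
          linarith
        · rw [if_neg hi1, hr] at h1
          rw [if_neg (fun h => hi1 (hiff.mp h))]
          norm_num
          linarith
      · have ih' := ih hk0
        have h := hk (k + 1) (by omega)
        have e1 : k + 1 - 1 = k := by omega
        rw [e1, hr] at h
        rcases Nat.lt_trichotomy i₀ (k + 1) with hlt | heq | hgt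
        · rw [if_pos (by omega : i₀ ≤ k)] at ih'
          rw [if_neg (by omega : ¬ k + 1 = i₀)] at h
          rw [if_pos (by omega : i₀ ≤ k + 1)]
          linarith
        · rw [if_neg (by omega : ¬ i₀ ≤ k)] at ih'
          rw [if_pos (by omega : k + 1 = i₀)] at h
          rw [if_pos (by omega : i₀ ≤ k + 1)]
          linarith
        · rw [if_neg (by omega : ¬ i₀ ≤ k)] at ih'
          rw [if_neg (by omega : ¬ k + 1 = i₀)] at h
          rw [if_neg (by omega : ¬ i₀ ≤ k + 1)]
          linarith
  -- conclusion
  intro k hkge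
  have hxk : x k = x i₀ := by
    have := hconst (k - i₀)
    rwa [show i₀ + (k - i₀) = k by omega] at this
  have hxk1 : x (k + 1) = x i₀ := by
    have := hconst (k + 1 - i₀)
    rwa [show i₀ + (k + 1 - i₀) = k + 1 by omega] at this
  have h := hg k (by omega)
  rw [if_pos hkge, hxk, hxk1] at h
  rw [hxk]
  linarith
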